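/- Let 2 ≤ p/q < 4 and f be a (p,q)-colouring of a graph G. If a vertex v lies on a directed cycle of the digraph D_f (arcs uv of G with f(v)-f(u) ≡ q mod p), then in every sequence of (p,q)-colourings starting from f in which consecutive colourings differ on a single vertex, the colour of v never changes. -/
import Mathlib


/-- A `(p,q)`-colouring of `G` with colours in `ℤ/pℤ`. -/
def IsZCol {V : Type*} (G : SimpleGraph V) (p q : ℕ) (f : V → ZMod p) : Prop :=
  ∀ ⦃u v : V⦄, G.Adj u v → q ≤ (f u - f v).val ∧ (f u - f v).val ≤ p - q

/-- For `2 ≤ p/q < 4`: if `v` lies on a directed cycle of `D_f` (arcs `u → v` with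
`f(v) - f(u) ≡ q mod p`), then in every sequence of proper `(p,q)`-colourings starting
at `f` in which consecutive colourings differ on (at most) a single vertex, the colour
of `v` never changes. -/
theorem stmt10 {V : Type*} (G : SimpleGraph V) (p q : ℕ)
    (hq : 0 < q) (h2 : 2 * q ≤ p) (h4 : p < 4 * q)
    (f : V → ZMod p) (hf : IsZCol G p q f) (v : V)
    (hv : Relation.TransGen (fun a b => G.Adj a b ∧ f b - f a = (q : ZMod p)) v v)
    (F : ℕ → V → ZMod p) (hF0 : F 0 = f)
    (hFcol : ∀ i : ℕ, IsZCol G p q (F i))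
    (hFstep : ∀ i : ℕ, ∃ w : V, ∀ x : V, x ≠ w → F (i + 1) x = F i x) :
    ∀ n : ℕ, F n v = f v := by
  have hp : 0 < p := by omega
  haveI : NeZero p := ⟨by omega⟩
  set R : V → V → Prop := fun a b => G.Adj a b ∧ f b - f a = (q : ZMod p) with hR
  have key : ∀ n, ∀ w, Relation.TransGen R v w → Relation.TransGen R w v → F n w = f w := by
    intro n
    induction n with
    | zero => intro w _ _; rw [hF0]
    | succ n ih =>
      intro w hvw hwv
      obtain ⟨w0, hw0⟩ := hFstep n
      by_cases hww0 : w = w0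
      · subst hww0
        -- predecessor u on the cycle
        obtain ⟨u, hvu, huw⟩ := Relation.TransGen.tail'_iff.mp hvw
        -- successor x on the cycle
        obtain ⟨x, hwx, hxv⟩ := Relation.TransGen.head'_iff.mp hwv
        have hu_ne : u ≠ w := huw.1.ne
        have hx_ne : x ≠ w := (hwx.1.ne).symm
        have hFu : F (n + 1) u = f u := by
          rw [hw0 u hu_ne]
          exact ih u (Relation.TransGen.trans_left hv hvu) (Relation.TransGen.head huw hwv)
        have hFx : F (n + 1) x = f x := by
          rw [hw0 x hx_ne]
          exact ih x (Relation.TransGen.tail hvw hwx) (Relation.TransGen.trans_right hxv hv)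
        have hA := hFcol (n + 1) huw.1.symm
        have hB := hFcol (n + 1) hwx.1.symm
        rw [hFu] at hA
        rw [hFx] at hB
        set A := (F (n + 1) w - f u).val with hAdef
        set B := (f x - F (n + 1) w).val with hBdef
        have hsum : (F (n + 1) w - f u) + (f x - F (n + 1) w) = ((2 * q : ℕ) : ZMod p) := by
          have e1 : (F (n + 1) w - f u) + (f x - F (n + 1) w) = f x - f u := by ring
          have e2 : f x - f u = (f x - f w) + (f w - f u) := by ring
          rw [e1, e2, hwx.2, huw.2]; push_cast; ring
        have hmod : (A + B) % p = (2 * q) % p := by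
          have h := ZMod.val_add (F (n + 1) w - f u) (f x - F (n + 1) w)
          rw [hsum, ZMod.val_natCast, ← hAdef, ← hBdef] at h
          exact h.symm
        have hdvd : p ∣ (A + B) - 2 * q :=
          (Nat.modEq_iff_dvd' (by omega)).mp hmod.symm
        have h0 : (A + B) - 2 * q = 0 := by
          rcases hA with ⟨hA1, hA2⟩
          rcases hB with ⟨hB1, hB2⟩
          exact Nat.eq_zero_of_dvd_of_lt hdvd (by omega)
        have hAq : A = q := by
          rcases hA with ⟨hA1, _⟩
          rcases hB with ⟨hB1, _⟩
          omega
        have hc : F (n + 1) w - f u = (q : ZMod p) := by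
          have h := ZMod.natCast_rightInverse (n := p) (F (n + 1) w - f u)
          rw [← hAdef] at h
          rw [← h, hAq]
        have heq : F (n + 1) w - f u = f w - f u := by rw [hc, huw.2]
        exact sub_left_inj.mp heq
      · rw [hw0 w hww0, ih w hvw hwv]
  intro n
  exact key n v hv hv
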